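/- Let A and B be Banach algebras. Suppose A is commutative and A² is dense in A (where A² = {ab : a,b ∈ A}). If A and B are approximately cyclic amenable, then the ℓ¹-direct sum A ⊕ B (with coordinatewise operations and norm ‖(a,b)‖ = ‖a‖ + ‖b‖) is approximately cyclic amenable. -/

import Mathlib

open Filter Topology

noncomputable section

universe u v

variable {A : Type u} [NonUnitalNormedRing A] [NormedSpace ℂ A]
  [IsScalarTower ℂ A A] [SMulCommClass ℂ A A]

/-- The left module action of `A` on its dual `A*`: `(a · f) b = f (b * a)`. -/
def lAct (a : A) (f : A →L[ℂ] ℂ) : A →L[ℂ] ℂ :=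
  f.comp ((ContinuousLinearMap.mul ℂ A).flip a)

/-- The right module action of `A` on its dual `A*`: `(f · a) b = f (a * b)`. -/
def rAct (f : A →L[ℂ] ℂ) (a : A) : A →L[ℂ] ℂ :=
  f.comp (ContinuousLinearMap.mul ℂ A a)

/-- A bounded linear `D : A → A*` is a derivation if `D (a * b) = D a · b + a · D b`. -/
def IsDerivation (D : A →L[ℂ] (A →L[ℂ] ℂ)) : Prop :=
  ∀ a b : A, D (a * b) = rAct (D a) b + lAct a (D b)

/-- A derivation `D : A → A*` is cyclic if `⟨D a, b⟩ + ⟨D b, a⟩ = 0` for all `a, b`. -/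
def IsCyclicDeriv (D : A →L[ℂ] (A →L[ℂ] ℂ)) : Prop :=
  ∀ a b : A, D a b + D b a = 0

/-- `D : A → A*` is approximately inner if there is a net `(f i)` in `A*` with
`D a = lim_i (a · f i - f i · a)` in norm, for every `a ∈ A`. -/
def IsApproxInner {A : Type u} [NonUnitalNormedRing A] [NormedSpace ℂ A]
    [IsScalarTower ℂ A A] [SMulCommClass ℂ A A] (D : A →L[ℂ] (A →L[ℂ] ℂ)) : Prop :=
  ∃ (ι : Type u) (l : Filter ι) (f : ι → (A →L[ℂ] ℂ)), l.NeBot ∧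
    ∀ a : A, Tendsto (fun i => lAct a (f i) - rAct (f i) a) l (𝓝 (D a))

/-- `D : A → A*` is inner if `D a = a · f - f · a` for some fixed `f ∈ A*`. -/
def IsInner (D : A →L[ℂ] (A →L[ℂ] ℂ)) : Prop :=
  ∃ f : A →L[ℂ] ℂ, ∀ a : A, D a = lAct a f - rAct f a

/-- A Banach algebra is approximately cyclic amenable if every cyclic bounded
derivation `D : A → A*` is approximately inner. -/
def ApproxCyclicAmenable (A : Type u) [NonUnitalNormedRing A] [NormedSpace ℂ A]
    [IsScalarTower ℂ A A] [SMulCommClass ℂ A A] : Prop :=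
  ∀ D : A →L[ℂ] (A →L[ℂ] ℂ), IsDerivation D → IsCyclicDeriv D → IsApproxInner D

/-- A Banach algebra is cyclic amenable if every cyclic bounded derivation
`D : A → A*` is inner. -/
def CyclicAmenable (A : Type u) [NonUnitalNormedRing A] [NormedSpace ℂ A]
    [IsScalarTower ℂ A A] [SMulCommClass ℂ A A] : Prop :=
  ∀ D : A →L[ℂ] (A →L[ℂ] ℂ), IsDerivation D → IsCyclicDeriv D → IsInner D

set_option linter.unusedSectionVars false

section L1Prod

variable {B : Type v} [NonUnitalNormedRing B] [NormedSpace ℂ B]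
  [IsScalarTower ℂ B B] [SMulCommClass ℂ B B]

/-- Coordinatewise ring structure on the `ℓ¹`-direct sum `A ⊕ B`. -/
instance : NonUnitalRing (WithLp 1 (A × B)) := (WithLp.equiv 1 (A × B)).nonUnitalRing

lemma l1prod_norm_def (x : WithLp 1 (A × B)) :
    ‖x‖ = ‖(WithLp.equiv 1 (A × B) x).1‖ + ‖(WithLp.equiv 1 (A × B) x).2‖ := by
  rw [WithLp.prod_norm_eq_add (by simp : 0 < (1 : ENNReal).toReal)]
  simp

/-- The `ℓ¹`-direct sum of two Banach algebras, with the coordinatewise product and the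
norm `‖(a, b)‖ = ‖a‖ + ‖b‖`, is again a Banach algebra. -/
instance : NonUnitalNormedRing (WithLp 1 (A × B)) where
  __ := (inferInstance : NonUnitalRing (WithLp 1 (A × B)))
  __ := (inferInstance : NormedAddCommGroup (WithLp 1 (A × B)))
  norm_mul_le x y := by
    rw [l1prod_norm_def, l1prod_norm_def x, l1prod_norm_def y]
    have hx1 : (WithLp.equiv 1 (A × B) (x * y)).1
        = (WithLp.equiv 1 (A × B) x).1 * (WithLp.equiv 1 (A × B) y).1 := rfl
    have hx2 : (WithLp.equiv 1 (A × B) (x * y)).2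
        = (WithLp.equiv 1 (A × B) x).2 * (WithLp.equiv 1 (A × B) y).2 := rfl
    rw [hx1, hx2]
    set a1 := (WithLp.equiv 1 (A × B) x).1
    set b1 := (WithLp.equiv 1 (A × B) x).2
    set a2 := (WithLp.equiv 1 (A × B) y).1
    set b2 := (WithLp.equiv 1 (A × B) y).2
    have h1 : ‖a1 * a2‖ ≤ ‖a1‖ * ‖a2‖ := norm_mul_le _ _
    have h2 : ‖b1 * b2‖ ≤ ‖b1‖ * ‖b2‖ := norm_mul_le _ _
    nlinarith [norm_nonneg a1, norm_nonneg a2, norm_nonneg b1, norm_nonneg b2]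

instance : IsScalarTower ℂ (WithLp 1 (A × B)) (WithLp 1 (A × B)) :=
  ⟨fun c x y => (WithLp.equiv 1 (A × B)).injective
    (smul_mul_assoc c (WithLp.equiv 1 (A × B) x) (WithLp.equiv 1 (A × B) y))⟩

instance : SMulCommClass ℂ (WithLp 1 (A × B)) (WithLp 1 (A × B)) :=
  ⟨fun c x y => (WithLp.equiv 1 (A × B)).injective
    (mul_smul_comm c (WithLp.equiv 1 (A × B) x) (WithLp.equiv 1 (A × B) y)).symm⟩

end L1Prod

section Aux

variable {A : Type u} [NonUnitalNormedRing A] [NormedSpace ℂ A]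
  [IsScalarTower ℂ A A] [SMulCommClass ℂ A A]
  {B : Type v} [NonUnitalNormedRing B] [NormedSpace ℂ B]
  [IsScalarTower ℂ B B] [SMulCommClass ℂ B B]

/-- Inclusion of `A` into the `ℓ¹`-direct sum. -/
def inA : A →L[ℂ] WithLp 1 (A × B) :=
  ((WithLp.prodContinuousLinearEquiv 1 ℂ A B).symm.toContinuousLinearMap).comp
    (ContinuousLinearMap.inl ℂ A B)

/-- Inclusion of `B` into the `ℓ¹`-direct sum. -/
def inB : B →L[ℂ] WithLp 1 (A × B) :=
  ((WithLp.prodContinuousLinearEquiv 1 ℂ A B).symm.toContinuousLinearMap).comp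
    (ContinuousLinearMap.inr ℂ A B)

/-- Projection onto `A`. -/
def prA : WithLp 1 (A × B) →L[ℂ] A :=
  (ContinuousLinearMap.fst ℂ A B).comp
    (WithLp.prodContinuousLinearEquiv 1 ℂ A B).toContinuousLinearMap

/-- Projection onto `B`. -/
def prB : WithLp 1 (A × B) →L[ℂ] B :=
  (ContinuousLinearMap.snd ℂ A B).comp
    (WithLp.prodContinuousLinearEquiv 1 ℂ A B).toContinuousLinearMap

lemma equiv_inA (a : A) : WithLp.equiv 1 (A × B) (inA a) = (a, 0) := rfl

lemma equiv_inB (b : B) : WithLp.equiv 1 (A × B) (inB b) = (0, b) := rfl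

lemma prA_apply (c : WithLp 1 (A × B)) : prA c = (WithLp.equiv 1 (A × B) c).1 := rfl

lemma prB_apply (c : WithLp 1 (A × B)) : prB c = (WithLp.equiv 1 (A × B) c).2 := rfl

lemma equiv_mul (c d : WithLp 1 (A × B)) :
    WithLp.equiv 1 (A × B) (c * d) = WithLp.equiv 1 (A × B) c * WithLp.equiv 1 (A × B) d := rfl

lemma inA_mul_inA (x y : A) : (inA x : WithLp 1 (A × B)) * inA y = inA (x * y) := by
  apply (WithLp.equiv 1 (A × B)).injective
  rw [equiv_mul, equiv_inA, equiv_inA, equiv_inA]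
  exact Prod.ext rfl (mul_zero 0)

lemma inB_mul_inB (x y : B) : (inB x : WithLp 1 (A × B)) * inB y = inB (x * y) := by
  apply (WithLp.equiv 1 (A × B)).injective
  rw [equiv_mul, equiv_inB, equiv_inB, equiv_inB]
  exact Prod.ext (mul_zero 0) rfl

lemma inA_mul_inB (x : A) (y : B) : (inA x : WithLp 1 (A × B)) * inB y = 0 := by
  apply (WithLp.equiv 1 (A × B)).injective
  rw [equiv_mul, equiv_inA, equiv_inB]
  exact Prod.ext (mul_zero x) (zero_mul y)

lemma inB_mul_inA (y : B) (x : A) : (inB y : WithLp 1 (A × B)) * inA x = 0 := by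
  apply (WithLp.equiv 1 (A × B)).injective
  rw [equiv_mul, equiv_inB, equiv_inA]
  exact Prod.ext (zero_mul x) (mul_zero y)

lemma decomp (c : WithLp 1 (A × B)) : c = inA (prA c) + inB (prB c) := by
  apply (WithLp.equiv 1 (A × B)).injective
  have hadd : WithLp.equiv 1 (A × B) (inA (prA c) + inB (prB c))
      = WithLp.equiv 1 (A × B) (inA (prA c)) + WithLp.equiv 1 (A × B) (inB (prB c)) := rfl
  rw [hadd, equiv_inA, equiv_inB, prA_apply, prB_apply]
  exact Prod.ext (add_zero _).symm (zero_add _).symm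

/-- Extension of a functional on `A` to the direct sum. -/
def extA : (A →L[ℂ] ℂ) →L[ℂ] (WithLp 1 (A × B) →L[ℂ] ℂ) :=
  (ContinuousLinearMap.compL ℂ (WithLp 1 (A × B)) A ℂ).flip prA

/-- Extension of a functional on `B` to the direct sum. -/
def extB : (B →L[ℂ] ℂ) →L[ℂ] (WithLp 1 (A × B) →L[ℂ] ℂ) :=
  (ContinuousLinearMap.compL ℂ (WithLp 1 (A × B)) B ℂ).flip prB

lemma extA_apply (φ : A →L[ℂ] ℂ) (c : WithLp 1 (A × B)) : extA φ c = φ (prA c) := rfl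

lemma extB_apply (ψ : B →L[ℂ] ℂ) (c : WithLp 1 (A × B)) : extB ψ c = ψ (prB c) := rfl

end Aux

set_option maxHeartbeats 1000000 in
/-- Let `A`, `B` be Banach algebras, with `A` commutative and `A²` dense in
`A`.  If `A` and `B` are approximately cyclic amenable, then so is the `ℓ¹`-direct sum
`A ⊕ B`. -/
theorem l1prod_approxCyclicAmenable
    {A : Type u} [NonUnitalNormedRing A] [NormedSpace ℂ A]
    [IsScalarTower ℂ A A] [SMulCommClass ℂ A A] [CompleteSpace A]
    {B : Type v} [NonUnitalNormedRing B] [NormedSpace ℂ B]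
    [IsScalarTower ℂ B B] [SMulCommClass ℂ B B] [CompleteSpace B]
    (hcomm : ∀ a b : A, a * b = b * a)
    (hdense : Dense {z : A | ∃ x y : A, z = x * y})
    (hA : ApproxCyclicAmenable A) (hB : ApproxCyclicAmenable B) :
    ApproxCyclicAmenable (WithLp 1 (A × B)) := by
  intro D hD hcyc
  -- the component derivations
  set DA : A →L[ℂ] (A →L[ℂ] ℂ) :=
    ((ContinuousLinearMap.compL ℂ A (WithLp 1 (A × B)) ℂ).flip inA).comp (D.comp inA) with hDAdef
  set DB : B →L[ℂ] (B →L[ℂ] ℂ) :=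
    ((ContinuousLinearMap.compL ℂ B (WithLp 1 (A × B)) ℂ).flip inB).comp (D.comp inB) with hDBdef
  have hDA_apply : ∀ x a : A, DA x a = D (inA x) (inA a) := fun _ _ => rfl
  have hDB_apply : ∀ x a : B, DB x a = D (inB x) (inB a) := fun _ _ => rfl
  -- cross terms vanish
  have hT : ∀ (a : A) (y : B), D (inA a) (inB y) = 0 := by
    intro a y
    have hcont : Continuous fun x : A => D (inA x) (inB y) :=
      ((ContinuousLinearMap.apply ℂ ℂ (inB (A := A) y)).comp
        (D.comp (inA (B := B)))).continuous
    have hzero : Set.EqOn (fun x : A => D (inA x) (inB y)) (fun _ => 0)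
        {z : A | ∃ u v : A, z = u * v} := by
      rintro _ ⟨u, v, rfl⟩
      have := hD (inA u) (inA v)
      have h1 : D (inA (u * v)) (inB y)
          = D (inA u) (inA v * inB y) + D (inA v) (inB y * inA u) := by
        rw [← inA_mul_inA, this]; rfl
      simpa [inA_mul_inB, inB_mul_inA] using h1
    exact congrFun (hcont.ext_on hdense continuous_const hzero) a
  have hS : ∀ (y : B) (a : A), D (inB y) (inA a) = 0 := by
    intro y a
    have := hcyc (inA a) (inB y)
    have h0 := hT a y
    linear_combination this - h0
  -- DA is a cyclic derivation
  have hDAder : IsDerivation DA := by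
    intro x y
    ext a
    have h1 : DA (x * y) a = D (inA (x * y)) (inA a) := rfl
    rw [h1, ← inA_mul_inA, hD (inA x) (inA y)]
    show D (inA x) (inA y * inA a) + D (inA y) (inA a * inA x)
        = DA x (y * a) + DA y (a * x)
    rw [inA_mul_inA, inA_mul_inA, hDA_apply, hDA_apply]
  have hDAcyc : IsCyclicDeriv DA := by
    intro x y
    exact hcyc (inA x) (inA y)
  have hDBder : IsDerivation DB := by
    intro x y
    ext a
    have h1 : DB (x * y) a = D (inB (x * y)) (inB a) := rfl
    rw [h1, ← inB_mul_inB, hD (inB x) (inB y)]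
    show D (inB x) (inB y * inB a) + D (inB y) (inB a * inB x)
        = DB x (y * a) + DB y (a * x)
    rw [inB_mul_inB, inB_mul_inB, hDB_apply, hDB_apply]
  have hDBcyc : IsCyclicDeriv DB := by
    intro x y
    exact hcyc (inB x) (inB y)
  obtain ⟨ιA, lA, f, hlA, hf⟩ := hA DA hDAder hDAcyc
  obtain ⟨ιB, lB, g, hlB, hg⟩ := hB DB hDBder hDBcyc
  -- decomposition of D
  have keyD : ∀ z : WithLp 1 (A × B), D z = extA (DA (prA z)) + extB (DB (prB z)) := by
    intro z
    ext c
    conv_lhs => rw [decomp z, map_add]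
    have hc : ∀ w : WithLp 1 (A × B), D w c = D w (inA (prA c)) + D w (inB (prB c)) := by
      intro w
      conv_lhs => rw [decomp c]
      exact map_add _ _ _
    show D (inA (prA z)) c + D (inB (prB z)) c = _
    rw [hc, hc, hT, hS]
    have hrhs : (extA (B := B) (DA (prA z)) + extB (A := A) (DB (prB z))) c
        = DA (prA z) (prA c) + DB (prB z) (prB c) := rfl
    rw [hrhs]
    show DA (prA z) (prA c) + 0 + (0 + DB (prB z) (prB c))
        = DA (prA z) (prA c) + DB (prB z) (prB c)
    ring
  -- interaction of the actions with the extensions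
  have keyAct : ∀ (z : WithLp 1 (A × B)) (φ : A →L[ℂ] ℂ) (ψ : B →L[ℂ] ℂ),
      lAct z (extA φ + extB ψ) - rAct (extA φ + extB ψ) z
        = extA (lAct (prA z) φ - rAct φ (prA z)) + extB (lAct (prB z) ψ - rAct ψ (prB z)) := by
    intro z φ ψ
    ext c
    have hl : (lAct z (extA φ + extB ψ) - rAct (extA φ + extB ψ) z) c
        = φ (prA (c * z)) + ψ (prB (c * z)) - (φ (prA (z * c)) + ψ (prB (z * c))) := rfl
    have hr : (extA (B := B) (lAct (prA z) φ - rAct φ (prA z))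
          + extB (A := A) (lAct (prB z) ψ - rAct ψ (prB z))) c
        = (φ (prA c * prA z) - φ (prA z * prA c)) + (ψ (prB c * prB z) - ψ (prB z * prB c)) := rfl
    rw [hl, hr]
    have h1 : prA (c * z) = prA c * prA z := rfl
    have h2 : prB (c * z) = prB c * prB z := rfl
    have h3 : prA (z * c) = prA z * prA c := rfl
    have h4 : prB (z * c) = prB z * prB c := rfl
    rw [h1, h2, h3, h4]; ring
  -- assemble the approximating net
  refine ⟨ULift.{v} ιA × ULift.{u} ιB, (lA.map ULift.up) ×ˢ (lB.map ULift.up),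
    fun i => extA (f i.1.down) + extB (g i.2.down), ?_, ?_⟩
  · haveI := hlA; haveI := hlB
    exact Filter.prod_neBot.2 ⟨Filter.map_neBot, Filter.map_neBot⟩
  · intro z
    have hdownA : Tendsto (fun i : ULift.{v} ιA × ULift.{u} ιB => i.1.down)
        ((lA.map ULift.up) ×ˢ (lB.map ULift.up)) lA :=
      (Filter.tendsto_map' (f := ULift.down) (g := ULift.up)
        (by exact tendsto_id)).comp tendsto_fst
    have hdownB : Tendsto (fun i : ULift.{v} ιA × ULift.{u} ιB => i.2.down)
        ((lA.map ULift.up) ×ˢ (lB.map ULift.up)) lB :=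
      (Filter.tendsto_map' (f := ULift.down) (g := ULift.up)
        (by exact tendsto_id)).comp tendsto_snd
    have tendA : Tendsto (fun i : ULift.{v} ιA × ULift.{u} ιB =>
        lAct (prA z) (f i.1.down) - rAct (f i.1.down) (prA z))
        ((lA.map ULift.up) ×ˢ (lB.map ULift.up)) (𝓝 (DA (prA z))) :=
      (hf (prA z)).comp hdownA
    have tendB : Tendsto (fun i : ULift.{v} ιA × ULift.{u} ιB =>
        lAct (prB z) (g i.2.down) - rAct (g i.2.down) (prB z))
        ((lA.map ULift.up) ×ˢ (lB.map ULift.up)) (𝓝 (DB (prB z))) :=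
      (hg (prB z)).comp hdownB
    have final := (((extA (A := A) (B := B)).continuous.tendsto _).comp tendA).add
      (((extB (A := A) (B := B)).continuous.tendsto _).comp tendB)
    rw [keyD z]
    convert final using 2 with i
    exact keyAct z (f i.1.down) (g i.2.down)
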